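/- If an infinite binary word x satisfies that both 0·x and 1·x belong to the shift orbit closure of the Thue-Morse word, then x equals the Thue-Morse word t or its complement t̄. -/

import Mathlib

/-- The Thue-Morse morphism on letters: μ(0)=01, μ(1)=10 (0 = `false`, 1 = `true`). -/
def mu : Bool → List Bool
  | false => [false, true]
  | true  => [true, false]

/-- The Thue-Morse morphism extended to words. -/
def muW (w : List Bool) : List Bool := w.flatMap mu

/-- The finite word `u` is a prefix of the infinite word `x`. -/
def IsPrefixI (u : List Bool) (x : ℕ → Bool) : Prop :=
  ∀ i, i < u.length → u.getD i false = x i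

/-- `t` is the Thue-Morse word: every `μ^n(0)` is a prefix of `t`. -/
def IsTMWord (t : ℕ → Bool) : Prop :=
  ∀ n, IsPrefixI (muW^[n] [false]) t

/-- The finite word `u` is a factor of the infinite word `x`. -/
def IsFactorI (u : List Bool) (x : ℕ → Bool) : Prop :=
  ∃ k, ∀ i, i < u.length → u.getD i false = x (k + i)

/-- Prepend a letter to an infinite word. -/
def consI (a : Bool) (x : ℕ → Bool) : ℕ → Bool :=
  fun n => if n = 0 then a else x (n - 1)

/-- `x` belongs to the shift orbit closure of the infinite word `w`. -/
def InOrbitClosure (x w : ℕ → Bool) : Prop :=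
  ∀ u : List Bool, IsFactorI u x → IsFactorI u w

/-! ### Auxiliary development -/

/-- The explicit Thue–Morse word: parity of the number of 1 bits. -/
def tmw (n : ℕ) : Bool := ((Nat.bits n).count true).bodd

lemma tmw_zero : tmw 0 = false := by simp [tmw]

lemma tmw_two_mul (n : ℕ) : tmw (2*n) = tmw n := by
  rcases Nat.eq_zero_or_pos n with h | h
  · simp [h]
  · have hb := Nat.bit0_bits n h.ne'
    simp [tmw, hb]

lemma tmw_two_mul_add_one (n : ℕ) : tmw (2*n+1) = !tmw n := by
  have hb := Nat.bit1_bits n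
  simp [tmw, hb, Nat.bodd_succ]

/-- On Thue–Morse, the letter after an even position is the complement. -/
lemma tmw_succ_of_even {p : ℕ} (hp : p % 2 = 0) : tmw (p+1) = !tmw p := by
  obtain ⟨j, rfl⟩ : ∃ j, p = 2*j := ⟨p/2, by omega⟩
  rw [tmw_two_mul_add_one, tmw_two_mul]

/-- Thue–Morse has no three equal consecutive letters. -/
lemma tmw_no_three {p : ℕ} (h1 : tmw p = tmw (p+1)) (h2 : tmw (p+1) = tmw (p+2)) : False := by
  rcases Nat.even_or_odd p with he | ho
  · have he' : p % 2 = 0 := Nat.even_iff.mp he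
    have h := tmw_succ_of_even he'
    rw [h] at h1
    exact absurd h1 (by cases (tmw p) <;> simp)
  · have ho' : p % 2 = 1 := Nat.odd_iff.mp ho
    have hp1 : (p+1) % 2 = 0 := by omega
    have h := tmw_succ_of_even hp1
    rw [show p+1+1 = p+2 from rfl] at h
    rw [h] at h2
    exact absurd h2 (by cases (tmw (p+1)) <;> simp)

/-- prefix of an infinite word as a list -/
def pref (x : ℕ → Bool) (m : ℕ) : List Bool := (List.range m).map x

lemma pref_length (x : ℕ → Bool) (m : ℕ) : (pref x m).length = m := by simp [pref]

lemma pref_getD (x : ℕ → Bool) {i m : ℕ} (h : i < m) : (pref x m).getD i false = x i := by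
  rw [List.getD_eq_getElem _ _ (by simpa [pref] using h)]
  simp [pref]

/-- The left-special hypothesis on `x`, phrased w.r.t. `tmw`. -/
def LS (x : ℕ → Bool) : Prop := ∀ (m : ℕ) (b : Bool), IsFactorI (b :: pref x m) tmw

lemma LS_occ {x : ℕ → Bool} (hx : LS x) (m : ℕ) (b : Bool) :
    ∃ p, tmw p = b ∧ ∀ i < m, tmw (p+1+i) = x i := by
  obtain ⟨p, hp⟩ := hx m b
  have hlen : (b :: pref x m).length = m + 1 := by simp [pref_length]
  refine ⟨p, ?_, ?_⟩
  · have := hp 0 (by omega)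
    simpa using this.symm
  · intro i hi
    have := hp (i+1) (by omega)
    rw [List.getD_cons_succ, pref_getD x hi] at this
    have harr : p + (i+1) = p + 1 + i := by omega
    rw [harr] at this
    exact this.symm

lemma LS_build {y : ℕ → Bool} {m : ℕ} {b : Bool} {q : ℕ}
    (h0 : tmw q = b) (h : ∀ i < m, tmw (q+1+i) = y i) :
    IsFactorI (b :: pref y m) tmw := by
  refine ⟨q, ?_⟩
  intro i hi
  have hlen : (b :: pref y m).length = m + 1 := by simp [pref_length]
  rw [hlen] at hi
  cases i with
  | zero => simpa using h0.symm
  | succ i =>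
    rw [List.getD_cons_succ, pref_getD y (by omega)]
    have := h i (by omega)
    have harr : q + (i+1) = q + 1 + i := by omega
    rw [harr]
    exact this.symm

/-- Alignment: a left-special infinite word is a μ-image. -/
lemma LS_align {x : ℕ → Bool} (hx : LS x) : ∀ k, x (2*k+1) = !x (2*k) := by
  intro k
  induction k using Nat.strong_induction_on with
  | _ k IH =>
  by_contra hne
  have heq : x (2*k+1) = x (2*k) := by
    revert hne; cases (x (2*k+1)) <;> cases (x (2*k)) <;> simp
  obtain ⟨p, hp0, hp⟩ := LS_occ hx (2*k+2) (x (2*k))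
  rcases Nat.even_or_odd p with hev | hod
  · -- p even: chain forces x (2j) constant, then head contradiction
    have hev' : p % 2 = 0 := Nat.even_iff.mp hev
    have hconst : ∀ j, j ≤ k → x (2*j) = x 0 := by
      intro j
      induction j with
      | zero => intro _; norm_num
      | succ j ihj =>
        intro hj
        have hjk : j < k := by omega
        have hstep : tmw (p+2*j+2+1) = !tmw (p+2*j+2) := tmw_succ_of_even (by omega)
        have e1 : tmw (p+1+(2*j+1)) = x (2*j+1) := hp _ (by omega)
        have e2 : tmw (p+1+(2*j+2)) = x (2*j+2) := hp _ (by omega)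
        have a1 : p+1+(2*j+1) = p+2*j+2 := by omega
        have a2 : p+1+(2*j+2) = p+2*j+2+1 := by omega
        rw [a1] at e1; rw [a2] at e2
        have hal : x (2*j+1) = !x (2*j) := IH j hjk
        have : x (2*j+2) = x (2*j) := by
          rw [← e2, hstep, e1, hal, Bool.not_not]
        have h2 : 2*(j+1) = 2*j+2 := by ring
        rw [h2, this, ihj (by omega)]
    have e0 : tmw (p+1) = x 0 := by
      have := hp 0 (by omega); simpa using this
    have hhd : tmw (p+1) = !tmw p := tmw_succ_of_even hev'
    have hcontra : x 0 = !x 0 := by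
      conv_lhs => rw [← e0]
      rw [hhd, hp0, hconst k le_rfl]
    exact absurd hcontra (by cases (x 0) <;> simp)
  · -- p odd: the final repeated pair sits at an even position: contradiction
    have hod' : p % 2 = 1 := Nat.odd_iff.mp hod
    have e1 : tmw (p+1+2*k) = x (2*k) := hp _ (by omega)
    have e2 : tmw (p+1+(2*k+1)) = x (2*k+1) := hp _ (by omega)
    have hstep : tmw (p+1+2*k+1) = !tmw (p+1+2*k) := tmw_succ_of_even (by omega)
    have a2 : p+1+(2*k+1) = p+1+2*k+1 := by omega
    rw [a2] at e2
    rw [hstep, e1] at e2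
    exact hne e2.symm

/-- Desubstitution: if `x` is left special then so is its μ-preimage. -/
lemma LS_desub {x : ℕ → Bool} (hx : LS x) : LS (fun n => x (2*n)) := by
  intro m b
  have hal := LS_align hx
  obtain ⟨p, hp0, hp⟩ := LS_occ hx (2*(m+4)) (!b)
  have podd : p % 2 = 1 := by
    by_contra hpe
    have hpe' : p % 2 = 0 := by omega
    -- chain: x (2j) constant for j < m+4
    have hconst : ∀ j, j < m+4 → x (2*j) = x 0 := by
      intro j
      induction j with
      | zero => intro _; norm_num
      | succ j ihj =>
        intro hj
        have hstep : tmw (p+2*j+2+1) = !tmw (p+2*j+2) := tmw_succ_of_even (by omega)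
        have e1 : tmw (p+1+(2*j+1)) = x (2*j+1) := hp _ (by omega)
        have e2 : tmw (p+1+(2*j+2)) = x (2*j+2) := hp _ (by omega)
        have a1 : p+1+(2*j+1) = p+2*j+2 := by omega
        have a2 : p+1+(2*j+2) = p+2*j+2+1 := by omega
        rw [a1] at e1; rw [a2] at e2
        have : x (2*j+2) = x (2*j) := by
          rw [← e2, hstep, e1, hal j, Bool.not_not]
        have h2 : 2*(j+1) = 2*j+2 := by ring
        rw [h2, this, ihj (by omega)]
    -- run of equal letters at consecutive desubstituted positions
    have hrun : ∀ j, j < m+3 → tmw (p/2 + 1 + j) = !x 0 := by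
      intro j hj
      have e1 : tmw (p+1+(2*j+1)) = x (2*j+1) := hp _ (by omega)
      have a1 : p+1+(2*j+1) = 2*(p/2 + 1 + j) := by omega
      rw [a1] at e1
      rw [tmw_two_mul] at e1
      rw [e1, hal j, hconst j (by omega)]
    have e01 : tmw (p/2+1) = !x 0 := by simpa using hrun 0 (by omega)
    have e11 : tmw (p/2+1+1) = !x 0 := hrun 1 (by omega)
    have e21 : tmw (p/2+1+2) = !x 0 := hrun 2 (by omega)
    exact tmw_no_three (e01.trans e11.symm) (e11.trans e21.symm)
  obtain ⟨q, rfl⟩ : ∃ q, p = 2*q+1 := ⟨p/2, by omega⟩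
  have hq : tmw q = b := by
    rw [tmw_two_mul_add_one] at hp0
    cases hb : tmw q <;> rw [hb] at hp0 <;> simp at hp0 <;> simp [hp0]
  refine LS_build hq ?_
  intro i hi
  have e1 : tmw (2*q+1+1+(2*i)) = x (2*i) := hp _ (by omega)
  have a1 : 2*q+1+1+(2*i) = 2*(q+1+i) := by omega
  rw [a1, tmw_two_mul] at e1
  exact e1

/-- Main pointwise identification. -/
lemma LS_main : ∀ k (x : ℕ → Bool), LS x → x k = cond (x 0) (!(tmw k)) (tmw k) := by
  intro k
  induction k using Nat.strong_induction_on with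
  | _ k IH =>
  intro x hx
  rcases Nat.eq_zero_or_pos k with rfl | hk
  · cases h : x 0 <;> simp [h, tmw_zero]
  · have hy := LS_desub hx
    have hmain := IH (k/2) (by omega) _ hy
    norm_num at hmain
    rcases Nat.even_or_odd k with he | ho
    · have he' : k % 2 = 0 := Nat.even_iff.mp he
      obtain ⟨j, hj⟩ : ∃ j, k = 2*j := ⟨k/2, by omega⟩
      have hjk : j = k/2 := by omega
      subst hj
      rw [← hjk] at hmain
      have : tmw (2*j) = tmw j := tmw_two_mul j
      rw [this]
      exact hmain
    · have ho' : k % 2 = 1 := Nat.odd_iff.mp ho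
      obtain ⟨j, hj⟩ : ∃ j, k = 2*j+1 := ⟨k/2, by omega⟩
      have hjk : j = k/2 := by omega
      subst hj
      rw [← hjk] at hmain
      have hal := LS_align hx j
      rw [hal, hmain, tmw_two_mul_add_one]
      cases (x 0) <;> simp

/-! ### Identifying `t` with `tmw` -/

lemma muW_cons (a : Bool) (l : List Bool) : muW (a :: l) = a :: (!a) :: muW l := by
  cases a <;> simp [muW, mu]

lemma muW_length (l : List Bool) : (muW l).length = 2 * l.length := by
  induction l with
  | nil => simp [muW]
  | cons a l ih => rw [muW_cons]; simp [ih]; omega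

lemma muW_getD (l : List Bool) : ∀ j, j < l.length →
    (muW l).getD (2*j) false = l.getD j false ∧
    (muW l).getD (2*j+1) false = !(l.getD j false) := by
  induction l with
  | nil => intro j hj; simp at hj
  | cons a l ih =>
    intro j hj
    rw [muW_cons]
    cases j with
    | zero => simp
    | succ j =>
      have h1 : 2*(j+1) = (2*j+1)+1 := by ring
      rw [h1]
      simp only [List.getD_cons_succ]
      exact ih j (by simpa using hj)

lemma A_spec : ∀ m, (muW^[m] [false]).length = 2^m ∧
    ∀ i < 2^m, (muW^[m] [false]).getD i false = tmw i := by
  intro m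
  induction m with
  | zero =>
    constructor
    · simp
    · intro i hi
      interval_cases i
      simp [tmw_zero]
  | succ m ih =>
    rw [Function.iterate_succ_apply']
    have hlen : (muW (muW^[m] [false])).length = 2^(m+1) := by
      rw [muW_length, ih.1]; ring
    refine ⟨hlen, ?_⟩
    intro i hi
    have hpow : 2^(m+1) = 2 * 2^m := by ring
    rcases Nat.even_or_odd i with he | ho
    · have he' : i % 2 = 0 := Nat.even_iff.mp he
      obtain ⟨j, rfl⟩ : ∃ j, i = 2*j := ⟨i/2, by omega⟩
      have hj : j < 2^m := by omega
      have := (muW_getD _ j (by rw [ih.1]; exact hj)).1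
      rw [this, ih.2 j hj, tmw_two_mul]
    · have ho' : i % 2 = 1 := Nat.odd_iff.mp ho
      obtain ⟨j, rfl⟩ : ∃ j, i = 2*j+1 := ⟨i/2, by omega⟩
      have hj : j < 2^m := by omega
      have := (muW_getD _ j (by rw [ih.1]; exact hj)).2
      rw [this, ih.2 j hj, tmw_two_mul_add_one]

lemma IsTMWord_eq {t : ℕ → Bool} (ht : IsTMWord t) : t = tmw := by
  funext n
  have hn : n < 2^n := Nat.lt_two_pow_self
  have h1 := ht n n (by rw [(A_spec n).1]; exact hn)
  rw [(A_spec n).2 n hn] at h1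
  exact h1.symm

theorem tm_left_special (t x : ℕ → Bool) (ht : IsTMWord t)
    (h0 : InOrbitClosure (consI false x) t)
    (h1 : InOrbitClosure (consI true x) t) :
    x = t ∨ x = fun n => !(t n) := by
  have htm : t = tmw := IsTMWord_eq ht
  subst htm
  have hx : LS x := by
    intro m b
    have hfac : IsFactorI (b :: pref x m) (consI b x) := by
      refine ⟨0, ?_⟩
      intro i hi
      cases i with
      | zero => simp [consI]
      | succ i =>
        rw [List.getD_cons_succ, pref_getD x (by simpa [pref_length] using hi)]
        simp [consI]
    cases b with
    | false => exact h0 _ hfac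
    | true => exact h1 _ hfac
  cases hx0 : x 0 with
  | false =>
    left
    funext n
    have := LS_main n x hx
    rw [hx0] at this
    simpa using this
  | true =>
    right
    funext n
    have := LS_main n x hx
    rw [hx0] at this
    simpa using this
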